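/- If $N-1$ is an odd prime power, $q$ is an even divisor of $N-2$, $x$ is a primitive element of $\mathrm{GF}(N-1)$, and $T \subseteq \mathbb{Z}_q$ has size $q/2$, then the multiset union over $r = 0, \dots, q-1$ of all differences $u - v$ with $u \neq v$ ranging over the set $S_{r,0} = \{x^{jq+i} : 0 \le j \le (N-2)/q - 1,\ i \in T + r \pmod q\}$ covers each nonzero element of $\mathrm{GF}(N-1)$ exactly $\frac{q}{2}\left(\frac{N-2}{2} - 1\right)$ times. In other words, $\{S_{r,0} : 0 \le r \le q-1\}$ is a difference family in $\mathrm{GF}(N-1)$. -/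

import Mathlib

lemma aux_sum_cast {q : ℕ} [NeZero q] (f : ZMod q → ℕ) :
    ∑ j ∈ Finset.range q, f (j : ZMod q) = ∑ s : ZMod q, f s := by
  refine Finset.sum_nbij' (fun j => (j : ZMod q)) (fun s => s.val) ?_ ?_ ?_ ?_ ?_
  · intro a _; exact Finset.mem_univ _
  · intro s _; exact Finset.mem_range.2 (ZMod.val_lt s)
  · intro a ha; exact ZMod.val_cast_of_lt (Finset.mem_range.1 ha)
  · intro s _; exact ZMod.natCast_rightInverse s
  · intro a _; rfl

lemma aux_sum_range_mul {q : ℕ} [NeZero q] (m : ℕ) (f : ZMod q → ℕ) :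
    ∑ j ∈ Finset.range (m * q), f (j : ZMod q) = m * ∑ s : ZMod q, f s := by
  induction m with
  | zero => simp
  | succ k ih =>
    have h1 : (k + 1) * q = k * q + q := by ring
    rw [h1, Finset.sum_range_add, ih]
    have h2 : ∀ i : ℕ, ((k * q + i : ℕ) : ZMod q) = ((i : ℕ) : ZMod q) := by
      intro i; push_cast [ZMod.natCast_self]; ring
    have h3 : ∑ i ∈ Finset.range q, f ((k * q + i : ℕ) : ZMod q)
        = ∑ i ∈ Finset.range q, f ((i : ℕ) : ZMod q) :=
      Finset.sum_congr rfl (fun i _ => by rw [h2 i])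
    rw [h3, aux_sum_cast f]
    ring

/-- Difference family property of the blocks `S_{r,0}` (Theorem 2.1, first part):
if `N-1` is an odd prime power, `q` an even divisor of `N-2`, `x` a primitive
element of `GF(N-1)` and `T ⊆ ℤ_q` of size `q/2`, then the multiset of differences
from the blocks `S_{r,0}`, `0 ≤ r ≤ q-1`, covers each nonzero element of `GF(N-1)`
exactly `(q/2)((N-2)/2 - 1)` times. -/
theorem stmt_0 (N q : ℕ) (F : Type) [Field F] [Fintype F] [DecidableEq F]
    (hNeven : Even N) (hcard : Fintype.card F = N - 1) (hNodd : Odd (N - 1))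
    (x : F) (hx : ∀ y : F, y ≠ 0 → ∃ k : ℕ, x ^ k = y)
    (hq : q ∣ N - 2) (hqeven : Even q)
    (T : Finset ℕ) (hT : T ⊆ Finset.range q) (hTcard : T.card = q / 2)
    (S : ℕ → F → Finset F)
    (hS : ∀ r a, S r a =
      (Finset.range ((N - 2) / q) ×ˢ T).image
        (fun p => x ^ (p.1 * q + (p.2 + r) % q) + a)) :
    ∀ d : F, d ≠ 0 →
      (∑ r ∈ Finset.range q,
        ((S r 0 ×ˢ S r 0).filter (fun p => p.1 ≠ p.2 ∧ p.1 - p.2 = d)).card)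
        = (q / 2) * ((N - 2) / 2 - 1) := by
  intro d hd
  rcases Nat.eq_zero_or_pos q with hq0 | hqpos
  · subst hq0; simp
  haveI : NeZero q := ⟨hqpos.ne'⟩
  set n := N - 2 with hn
  have hcard2 : 1 < Fintype.card F := Fintype.one_lt_card
  have hN4 : 4 ≤ N := by
    obtain ⟨k, hk⟩ := hNeven
    omega
  have hn2 : 2 ≤ n := by omega
  have hnq : q ≤ n := Nat.le_of_dvd (by omega) hq
  set m := n / q with hm
  have hmq : m * q = n := Nat.div_mul_cancel hq
  have hm1 : 1 ≤ m := by
    rcases Nat.eq_zero_or_pos m with h | h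
    · rw [h, zero_mul] at hmq; omega
    · exact h
  -- x is nonzero
  have hx0 : x ≠ 0 := by
    intro h0
    have h3 : 3 ≤ Fintype.card F := by omega
    have hlt : ({0, 1} : Finset F).card < (Finset.univ : Finset F).card := by
      calc ({0, 1} : Finset F).card ≤ 2 := (Finset.card_insert_le _ _).trans (by simp)
        _ < (Finset.univ : Finset F).card := by rw [Finset.card_univ]; omega
    have hns : ¬ (Finset.univ : Finset F) ⊆ ({0, 1} : Finset F) :=
      fun hsub => absurd (Finset.card_le_card hsub) (by omega)
    obtain ⟨y, _, hy⟩ := Finset.not_subset.mp hns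
    simp only [Finset.mem_insert, Finset.mem_singleton] at hy
    push_neg at hy
    obtain ⟨k, hk⟩ := hx y hy.1
    rcases Nat.eq_zero_or_pos k with hk0 | hk1
    · rw [hk0, pow_zero] at hk; exact hy.2 hk.symm
    · rw [h0, zero_pow (by omega)] at hk; exact hy.1 hk.symm
  have pown0 : ∀ k : ℕ, x ^ k ≠ 0 := fun k => pow_ne_zero k hx0
  obtain ⟨u, hu⟩ := Ne.isUnit hx0
  have horder : orderOf x = n := by
    have h1 : ∀ y : Fˣ, y ∈ Subgroup.zpowers u := by
      intro y
      obtain ⟨k, hk⟩ := hx (y : F) (Units.ne_zero y)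
      refine Subgroup.mem_zpowers_iff.mpr ⟨(k : ℤ), ?_⟩
      apply Units.ext
      rw [zpow_natCast, Units.val_pow_eq_pow_val, hu, hk]
    have h2 := orderOf_eq_card_of_forall_mem_zpowers h1
    rw [Nat.card_eq_fintype_card, Fintype.card_units, hcard] at h2
    rw [← hu, orderOf_units, h2]
    omega
  have horderu : orderOf u = n := by rw [← orderOf_units, hu, horder]
  have key : ∀ a b : ℕ, x ^ a = x ^ b ↔ a % n = b % n := by
    intro a b
    rw [← hu, ← Units.val_pow_eq_pow_val, ← Units.val_pow_eq_pow_val, ← Units.ext_iff,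
      pow_eq_pow_iff_modEq, horderu]
    exact Iff.rfl
  -- discrete logarithm
  have hBex : ∀ y : F, ∃ k, k < n ∧ (y ≠ 0 → x ^ k = y) := by
    intro y
    by_cases hy : y = 0
    · exact ⟨0, by omega, fun h => absurd hy h⟩
    · obtain ⟨k, hk⟩ := hx y hy
      refine ⟨k % n, Nat.mod_lt _ (by omega), fun _ => ?_⟩
      rw [← hk, ← horder]
      apply pow_mod_orderOf
  choose B hBlt hBeq using hBex
  have hBpow : ∀ e : ℕ, B (x ^ e) = e % n := by
    intro e
    have h := (key _ _).1 (hBeq (x ^ e) (pown0 e))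
    rwa [Nat.mod_eq_of_lt (hBlt _)] at h
  have hxd1 : ∀ δ : ℕ, 0 < δ → δ < n → x ^ δ - 1 ≠ 0 := by
    intro δ h1 h2
    rw [sub_ne_zero]
    intro h
    have h4 := (key δ 0).1 (by rw [pow_zero]; exact h)
    rw [Nat.mod_eq_of_lt h2, Nat.zero_mod] at h4
    omega
  set bb : ℕ → ℕ := fun δ => B (d / (x ^ δ - 1)) with hbbdef
  have hbblt : ∀ δ, bb δ < n := fun δ => hBlt _
  have hbbval : ∀ δ : ℕ, 0 < δ → δ < n → x ^ bb δ = d / (x ^ δ - 1) :=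
    fun δ h1 h2 => hBeq _ (div_ne_zero hd (hxd1 δ h1 h2))
  set T' : Finset (ZMod q) := T.image (fun i : ℕ => (i : ZMod q)) with hT'
  have hT'card : T'.card = q / 2 := by
    rw [hT', Finset.card_image_of_injOn, hTcard]
    intro a ha b hb hab
    have ha' := Finset.mem_range.1 (hT ha)
    have hb' := Finset.mem_range.1 (hT hb)
    have h := congrArg ZMod.val hab
    rwa [ZMod.val_cast_of_lt ha', ZMod.val_cast_of_lt hb'] at h
  -- membership criterion
  have hmemS : ∀ (r e : ℕ), x ^ e ∈ S r 0 ↔ ((e : ZMod q) - (r : ZMod q)) ∈ T' := by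
    intro r e
    rw [hS r 0]
    simp only [Finset.mem_image, Finset.mem_product, Finset.mem_range, add_zero, Prod.exists]
    constructor
    · rintro ⟨j, i, ⟨hj, hi⟩, hpe⟩
      have hmod : (j * q + (i + r) % q) % n = e % n := (key _ _).1 hpe
      have hmod' : Nat.ModEq n (j * q + (i + r) % q) e := hmod
      have hq' : ((j * q + (i + r) % q : ℕ) : ZMod q) = (e : ZMod q) :=
        (ZMod.natCast_eq_natCast_iff _ _ _).mpr (Nat.ModEq.of_dvd hq hmod')
      rw [hT']
      refine Finset.mem_image.mpr ⟨i, hi, ?_⟩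
      have h5 : ((i : ZMod q) + (r : ZMod q)) = (e : ZMod q) := by
        rw [← hq']
        push_cast [ZMod.natCast_mod, ZMod.natCast_self]
        ring
      rw [← h5]; ring
    · intro hmem
      rw [hT'] at hmem
      obtain ⟨i, hiT, hie⟩ := Finset.mem_image.mp hmem
      refine ⟨e % n / q, i, ⟨?_, hiT⟩, ?_⟩
      · rw [hm]
        exact Nat.div_lt_div_of_lt_of_dvd hq (Nat.mod_lt _ (by omega))
      · have hir : (i + r) % q = e % q := by
          have h6 : ((i + r : ℕ) : ZMod q) = (e : ZMod q) := by
            push_cast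
            rw [hie]; ring
          exact (ZMod.natCast_eq_natCast_iff' _ _ _).mp h6
        have hexp : e % n / q * q + (i + r) % q = e % n := by
          rw [hir, ← Nat.mod_mod_of_dvd e hq]
          exact Nat.div_add_mod' (e % n) q
        rw [hexp, ← horder]
        apply pow_mod_orderOf
  -- core bijection lemma
  have hcore : ∀ (r : ℕ) (u v : F), u ∈ S r 0 → v ∈ S r 0 → u ≠ v → u - v = d →
      (B u + n - B v) % n ∈ Finset.Ico 1 n ∧
      x ^ bb ((B u + n - B v) % n) = v ∧
      x ^ (bb ((B u + n - B v) % n) + (B u + n - B v) % n) = u := by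
    intro r u v huS hvS huv hduv
    have hun0 : u ≠ 0 := by
      rw [hS r 0] at huS
      obtain ⟨p, _, hp⟩ := Finset.mem_image.mp huS
      rw [← hp, add_zero]; exact pown0 _
    have hvn0 : v ≠ 0 := by
      rw [hS r 0] at hvS
      obtain ⟨p, _, hp⟩ := Finset.mem_image.mp hvS
      rw [← hp, add_zero]; exact pown0 _
    have ha : x ^ B u = u := hBeq u hun0
    have hb : x ^ B v = v := hBeq v hvn0
    have halt : B u < n := hBlt u
    have hblt : B v < n := hBlt v
    have hab : B u ≠ B v := fun h => huv (by rw [← ha, ← hb, h])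
    set δ := (B u + n - B v) % n with hδ
    have hδlt : δ < n := Nat.mod_lt _ (by omega)
    have hcong : (B v + δ) % n = B u % n := by
      have h1 : (B v + δ) ≡ B v + (B u + n - B v) [MOD n] :=
        Nat.ModEq.add_left _ (Nat.mod_modEq _ _)
      have h2 : B v + (B u + n - B v) = B u + n := by omega
      calc (B v + δ) % n = (B v + (B u + n - B v)) % n := h1
        _ = (B u + n) % n := by rw [h2]
        _ = B u % n := Nat.add_mod_right _ _
    have hδpos : 0 < δ := by
      rcases Nat.eq_zero_or_pos δ with h0 | h
      · exfalso; apply hab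
        rw [h0, add_zero, Nat.mod_eq_of_lt hblt, Nat.mod_eq_of_lt halt] at hcong
        omega
      · exact h
    have hxu : x ^ (B v + δ) = u := ((key _ _).2 hcong).trans ha
    have hne1 : x ^ δ - 1 ≠ 0 := hxd1 δ hδpos hδlt
    have hveq : v * (x ^ δ - 1) = d := by
      rw [mul_sub_one, ← hb, ← pow_add, hxu, hb]
      exact hduv
    have hvd : v = d / (x ^ δ - 1) := by
      rw [eq_div_iff hne1]; exact hveq
    have hbbv : x ^ bb δ = v := by rw [hbbval δ hδpos hδlt, ← hvd]
    have hbbb : bb δ = B v := by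
      have h := (key _ _).1 (hbbv.trans hb.symm)
      rwa [Nat.mod_eq_of_lt (hbblt δ), Nat.mod_eq_of_lt hblt] at h
    exact ⟨Finset.mem_Ico.mpr ⟨hδpos, hδlt⟩, hbbv, by rw [hbbb]; exact hxu⟩
  -- per-r counting
  have hArd : ∀ r : ℕ,
      ((S r 0 ×ˢ S r 0).filter (fun p => p.1 ≠ p.2 ∧ p.1 - p.2 = d)).card
      = ((Finset.Ico 1 n).filter
          (fun δ => x ^ bb δ ∈ S r 0 ∧ x ^ (bb δ + δ) ∈ S r 0)).card := by
    intro r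
    refine Finset.card_nbij' (fun p => (B p.1 + n - B p.2) % n)
        (fun δ => (x ^ (bb δ + δ), x ^ bb δ)) ?_ ?_ ?_ ?_
    · intro p hp
      simp only [Finset.mem_coe, Finset.mem_filter, Finset.mem_product] at hp
      obtain ⟨⟨h1, h2⟩, h3, h4⟩ := hp
      obtain ⟨hmem, hv, hu'⟩ := hcore r p.1 p.2 h1 h2 h3 h4
      refine Finset.mem_filter.mpr ⟨hmem, ?_, ?_⟩
      · rw [hv]; exact h2
      · rw [hu']; exact h1
    · intro δ hδm
      simp only [Finset.mem_coe, Finset.mem_filter, Finset.mem_Ico] at hδm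
      obtain ⟨⟨hδ1, hδ2⟩, hSv, hSu⟩ := hδm
      have hne1 : x ^ δ - 1 ≠ 0 := hxd1 δ hδ1 hδ2
      have hdiff : x ^ (bb δ + δ) - x ^ bb δ = d := by
        rw [pow_add, ← mul_sub_one, hbbval δ hδ1 hδ2, div_mul_cancel₀ d hne1]
      refine Finset.mem_filter.mpr ⟨Finset.mem_product.mpr ⟨hSu, hSv⟩, ?_, hdiff⟩
      intro h
      apply hd
      rw [← hdiff, show (x ^ (bb δ + δ) : F) = x ^ bb δ from h, sub_self]
    · intro p hp
      simp only [Finset.mem_coe, Finset.mem_filter, Finset.mem_product] at hp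
      obtain ⟨⟨h1, h2⟩, h3, h4⟩ := hp
      obtain ⟨_, hv, hu'⟩ := hcore r p.1 p.2 h1 h2 h3 h4
      exact Prod.ext hu' hv
    · intro δ hδm
      simp only [Finset.mem_coe, Finset.mem_filter, Finset.mem_Ico] at hδm
      obtain ⟨⟨hδ1, hδ2⟩, -, -⟩ := hδm
      show (B (x ^ (bb δ + δ)) + n - B (x ^ bb δ)) % n = δ
      rw [hBpow, hBpow, Nat.mod_eq_of_lt (hbblt δ)]
      have h1 : ((bb δ + δ) % n + (n - bb δ)) ≡ ((bb δ + δ) + (n - bb δ)) [MOD n] :=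
        (Nat.mod_modEq _ _).add_right _
      have h2 : bb δ + δ + (n - bb δ) = δ + n := by have := hbblt δ; omega
      calc ((bb δ + δ) % n + n - bb δ) % n
          = ((bb δ + δ) % n + (n - bb δ)) % n := by
            have h3 : (bb δ + δ) % n + n - bb δ = (bb δ + δ) % n + (n - bb δ) := by
              have := hbblt δ; omega
            rw [h3]
        _ = ((bb δ + δ) + (n - bb δ)) % n := h1
        _ = (δ + n) % n := by rw [h2]
        _ = δ % n := Nat.add_mod_right δ n
        _ = δ := Nat.mod_eq_of_lt hδ2
  -- swap the two sums
  have hswap : ∑ r ∈ Finset.range q,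
        ((Finset.Ico 1 n).filter
          (fun δ => x ^ bb δ ∈ S r 0 ∧ x ^ (bb δ + δ) ∈ S r 0)).card
      = ∑ δ ∈ Finset.Ico 1 n,
        ((Finset.range q).filter
          (fun r => x ^ bb δ ∈ S r 0 ∧ x ^ (bb δ + δ) ∈ S r 0)).card := by
    simp_rw [Finset.card_filter]
    exact Finset.sum_comm
  -- inner count per δ
  have hinner : ∀ δ ∈ Finset.Ico 1 n,
      ((Finset.range q).filter
        (fun r => x ^ bb δ ∈ S r 0 ∧ x ^ (bb δ + δ) ∈ S r 0)).card
      = (T'.filter (fun t => t + ((δ : ℕ) : ZMod q) ∈ T')).card := by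
    intro δ _
    have h1 : ((Finset.range q).filter
          (fun r => x ^ bb δ ∈ S r 0 ∧ x ^ (bb δ + δ) ∈ S r 0))
        = ((Finset.range q).filter
          (fun r : ℕ => ((bb δ : ZMod q) - (r : ZMod q)) ∈ T'
            ∧ ((bb δ : ZMod q) + (δ : ZMod q) - (r : ZMod q)) ∈ T')) := by
      apply Finset.filter_congr
      intro r _
      rw [hmemS r (bb δ), hmemS r (bb δ + δ), Nat.cast_add]
    rw [h1]
    refine Finset.card_nbij' (fun r : ℕ => (bb δ : ZMod q) - (r : ℕ))
        (fun t => ((bb δ : ZMod q) - t).val) ?_ ?_ ?_ ?_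
    · intro r hr
      simp only [Finset.mem_coe, Finset.mem_filter] at hr
      obtain ⟨_, hA, hB⟩ := hr
      refine Finset.mem_filter.mpr ⟨hA, ?_⟩
      have h7 : (bb δ : ZMod q) + (δ : ZMod q) - (r : ZMod q)
          = ((bb δ : ZMod q) - (r : ZMod q)) + (δ : ZMod q) := by ring
      rwa [h7] at hB
    · intro t ht
      simp only [Finset.mem_coe, Finset.mem_filter] at ht
      obtain ⟨ht1, ht2⟩ := ht
      refine Finset.mem_filter.mpr ⟨Finset.mem_range.2 (ZMod.val_lt _), ?_, ?_⟩
      · rw [ZMod.natCast_rightInverse _]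
        simpa using ht1
      · rw [ZMod.natCast_rightInverse _]
        have h8 : (bb δ : ZMod q) + (δ : ZMod q) - ((bb δ : ZMod q) - t)
            = t + (δ : ZMod q) := by ring
        rw [h8]; exact ht2
    · intro r hr
      simp only [Finset.mem_coe, Finset.mem_filter, Finset.mem_range] at hr
      show ((bb δ : ZMod q) - ((bb δ : ZMod q) - (r : ZMod q))).val = r
      have h9 : (bb δ : ZMod q) - ((bb δ : ZMod q) - (r : ZMod q)) = (r : ZMod q) := by ring
      rw [h9, ZMod.val_cast_of_lt hr.1]
    · intro t _
      show (bb δ : ZMod q) - ((((bb δ : ZMod q) - t).val : ℕ) : ZMod q) = t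
      rw [ZMod.natCast_rightInverse _]
      ring
  -- the sum over all residues
  have hgsum : ∑ s : ZMod q, (T'.filter (fun t => t + s ∈ T')).card = (q / 2) * (q / 2) := by
    have h1 : ∀ s : ZMod q, (T'.filter (fun t => t + s ∈ T')).card
        = ∑ t ∈ T', if t + s ∈ T' then 1 else 0 := fun s => Finset.card_filter _ _
    rw [Finset.sum_congr rfl fun s _ => h1 s, Finset.sum_comm]
    have h2 : ∀ t : ZMod q, (∑ s : ZMod q, if t + s ∈ T' then 1 else 0) = q / 2 := by
      intro t
      rw [← Finset.card_filter, ← hT'card]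
      refine Finset.card_nbij' (fun s => t + s) (fun y => y - t) ?_ ?_ ?_ ?_
      · intro s hs; exact (Finset.mem_filter.mp hs).2
      · intro y hy
        refine Finset.mem_filter.mpr ⟨Finset.mem_univ _, ?_⟩
        have : t + (y - t) = y := by ring
        rwa [this]
      · intro s _
        show t + s - t = s
        ring
      · intro y _
        show t + (y - t) = y
        ring
    rw [Finset.sum_congr rfl fun t _ => h2 t, Finset.sum_const, hT'card, smul_eq_mul]
  have hrange : ∑ δ ∈ Finset.range n, (T'.filter (fun t => t + ((δ : ℕ) : ZMod q) ∈ T')).card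
      = m * ((q / 2) * (q / 2)) := by
    rw [← hmq]
    calc ∑ δ ∈ Finset.range (m * q), (T'.filter (fun t => t + ((δ : ℕ) : ZMod q) ∈ T')).card
        = m * ∑ s : ZMod q, (T'.filter (fun t => t + s ∈ T')).card :=
          aux_sum_range_mul (q := q) m (fun s => (T'.filter (fun t => t + s ∈ T')).card)
      _ = m * ((q / 2) * (q / 2)) := by rw [hgsum]
  have hg0 : (T'.filter (fun t => t + (((0 : ℕ) : ℕ) : ZMod q) ∈ T')).card = q / 2 := by
    rw [← hT'card]
    congr 1
    apply Finset.filter_true_of_mem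
    intro t ht
    simpa using ht
  have hsplit : ∑ δ ∈ Finset.range n, (T'.filter (fun t => t + ((δ : ℕ) : ZMod q) ∈ T')).card
      = (T'.filter (fun t => t + (((0 : ℕ) : ℕ) : ZMod q) ∈ T')).card
        + ∑ δ ∈ Finset.Ico 1 n, (T'.filter (fun t => t + ((δ : ℕ) : ZMod q) ∈ T')).card := by
    rw [Finset.range_eq_Ico]
    exact Finset.sum_eq_sum_Ico_succ_bot (by omega) _
  obtain ⟨K, hK⟩ := hqeven
  have hq2 : q / 2 = K := by omega
  have hn2' : n / 2 = m * K := by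
    have h1 : n = m * K * 2 := by rw [← hmq, hK]; ring
    rw [h1]
    exact Nat.mul_div_cancel _ (by norm_num)
  have hmK1 : 1 ≤ m * K := by
    have := Nat.mul_pos hm1 (show 0 < K by omega)
    omega
  calc ∑ r ∈ Finset.range q,
        ((S r 0 ×ˢ S r 0).filter (fun p => p.1 ≠ p.2 ∧ p.1 - p.2 = d)).card
      = ∑ r ∈ Finset.range q,
        ((Finset.Ico 1 n).filter
          (fun δ => x ^ bb δ ∈ S r 0 ∧ x ^ (bb δ + δ) ∈ S r 0)).card :=
        Finset.sum_congr rfl fun r _ => hArd r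
    _ = ∑ δ ∈ Finset.Ico 1 n,
        ((Finset.range q).filter
          (fun r => x ^ bb δ ∈ S r 0 ∧ x ^ (bb δ + δ) ∈ S r 0)).card := hswap
    _ = ∑ δ ∈ Finset.Ico 1 n, (T'.filter (fun t => t + ((δ : ℕ) : ZMod q) ∈ T')).card :=
        Finset.sum_congr rfl hinner
    _ = m * ((q / 2) * (q / 2)) - q / 2 := by
        rw [hg0] at hsplit
        omega
    _ = (q / 2) * (n / 2 - 1) := by
        rw [hq2, hn2']
        obtain ⟨c, hc⟩ := Nat.exists_eq_add_of_le hmK1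
        have hx1 : m * (K * K) = (m * K) * K := by ring
        rw [hx1, hc]
        have h10 : (1 + c) * K = K + c * K := by ring
        rw [h10, Nat.add_sub_cancel_left, Nat.add_sub_cancel_left]
        ring
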